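/- For any discrete random variable X with probability mass function p(x) = P(X = x), the mid-distribution function F_mid(x) = F(x) - 0.5·p(x) satisfies E[F_mid(X)] = 1/2. -/
import Mathlib


open Finset

/-- For a discrete random variable `X` taking finitely many values `x 0 < ... < x (k-1)`
with probabilities `p i > 0` summing to 1, the mid-distribution function
`Fmid t = F t - 0.5 * P(X = t)` satisfies `E[Fmid(X)] = 1/2`. -/
theorem mid_distribution_mean_half (k : ℕ) (hk : 0 < k) (x : Fin k → ℝ) (hx : StrictMono x)
    (p : Fin k → ℝ) (hp : ∀ i, 0 < p i) (hsum : ∑ i, p i = 1)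
    (F : ℝ → ℝ) (hF : ∀ t, F t = ∑ j, if x j ≤ t then p j else 0)
    (Fmid : ℝ → ℝ) (hFmid : ∀ i : Fin k, Fmid (x i) = F (x i) - (1 / 2) * p i) :
    ∑ i, p i * Fmid (x i) = 1 / 2 := by
  have key : ∀ i : Fin k, Fmid (x i) = (∑ j, if j ≤ i then p j else 0) - 1 / 2 * p i := by
    intro i
    rw [hFmid, hF]
    congr 1
    exact Finset.sum_congr rfl fun j _ => by simp [hx.le_iff_le]
  have hA : (∑ i, ∑ j, if j ≤ i then p i * p j else 0)
      + (∑ i, ∑ j, if j ≤ i then p i * p j else 0) = 1 + ∑ i, p i * p i := by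
    have hswap : (∑ i, ∑ j, if j ≤ i then p i * p j else 0)
        = ∑ i, ∑ j, if i ≤ j then p i * p j else 0 := by
      rw [Finset.sum_comm]
      exact Finset.sum_congr rfl fun i _ => Finset.sum_congr rfl fun j _ => by
        rw [mul_comm]
    nth_rewrite 2 [hswap]
    rw [← Finset.sum_add_distrib]
    have : ∀ i : Fin k, (∑ j, if j ≤ i then p i * p j else 0)
        + (∑ j, if i ≤ j then p i * p j else 0)
        = (∑ j, p i * p j) + p i * p i := by
      intro i
      rw [← Finset.sum_add_distrib]
      rw [show (∑ j, p i * p j) + p i * p i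
        = ∑ j, (p i * p j + if i = j then p i * p j else 0) by
          rw [Finset.sum_add_distrib]; simp]
      refine Finset.sum_congr rfl fun j _ => ?_
      rcases lt_trichotomy i j with h | h | h
      · simp [h.le, h.not_ge, h.ne]
      · simp [h]
      · simp [h.le, h.not_ge, (h.ne).symm]
    rw [Finset.sum_congr rfl fun i _ => this i, Finset.sum_add_distrib]
    congr 1
    rw [← Finset.sum_mul_sum, hsum, one_mul]
  have h1 : ∑ i, p i * Fmid (x i)
      = (∑ i, ∑ j, if j ≤ i then p i * p j else 0) - 1 / 2 * ∑ i, p i * p i := by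
    simp_rw [key, mul_sub, Finset.sum_sub_distrib, Finset.mul_sum, mul_ite, mul_zero]
    congr 1
    exact Finset.sum_congr rfl fun i _ => by ring
  rw [h1]
  linarith
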